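/- In the two-agent, two-state belief reporting game with log utility and the symmetric linear opinion pool, agent a's best response to report ρ_b is: 1 if ρ_b ≤ 2p_a − 1; 2p_a − ρ_b if 2p_a − 1 ≤ ρ_b ≤ 2p_a; and 0 if ρ_b ≥ 2p_a, where p_a is a's true probability of state 1. -/

import Mathlib

/-- Two-state log payoff with convention `0 · ln 0 = 0`. -/
noncomputable def pay2 (p x : ℝ) : EReal :=
  (if x = 0 ∧ p ≠ 0 then (⊥ : EReal) else ((p * Real.log x : ℝ) : EReal)) +
  (if x = 1 ∧ p ≠ 1 then (⊥ : EReal) else (((1 - p) * Real.log (1 - x) : ℝ) : EReal))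

/-- Derivative of the real log payoff. -/
lemma hasDeriv2 (p t : ℝ) (ht0 : t ≠ 0) (ht1 : t ≠ 1) :
    HasDerivAt (fun t => p * Real.log t + (1 - p) * Real.log (1 - t))
      (p / t - (1 - p) / (1 - t)) t := by
  have h1 : HasDerivAt Real.log t⁻¹ t := Real.hasDerivAt_log ht0
  have h2 : HasDerivAt (fun t : ℝ => 1 - t) (-1) t := by
    simpa using (hasDerivAt_id' t).const_sub (1:ℝ)
  have h3 : HasDerivAt (fun t : ℝ => Real.log (1 - t)) ((1 - t)⁻¹ * (-1)) t :=
    (Real.hasDerivAt_log (sub_ne_zero.mpr (Ne.symm ht1))).comp t h2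
  have h : HasDerivAt (fun t => p * Real.log t + (1 - p) * Real.log (1 - t))
      (p * t⁻¹ + (1 - p) * ((1 - t)⁻¹ * -1)) t := (h1.const_mul p).add (h3.const_mul (1 - p))
  convert h using 1
  ring

/-- The real log payoff is increasing below `p`. -/
lemma real_incr (p x y : ℝ) (hx : 0 < x) (hxy : x ≤ y) (hyp : y ≤ p)
    (hy1 : y < 1) :
    p * Real.log x + (1 - p) * Real.log (1 - x) ≤ p * Real.log y + (1 - p) * Real.log (1 - y) := by
  set f : ℝ → ℝ := fun t => p * Real.log t + (1 - p) * Real.log (1 - t) with hf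
  have hd : ∀ t ∈ Set.Icc x y, HasDerivAt f (p / t - (1 - p) / (1 - t)) t := by
    intro t ht
    exact hasDeriv2 p t (ne_of_gt (lt_of_lt_of_le hx ht.1)) (ne_of_lt (lt_of_le_of_lt ht.2 hy1))
  have key : MonotoneOn f (Set.Icc x y) := by
    apply monotoneOn_of_deriv_nonneg (convex_Icc x y)
    · exact fun t ht => (hd t ht).continuousAt.continuousWithinAt
    · intro t ht
      rw [interior_Icc] at ht
      exact (hd t ⟨le_of_lt ht.1, le_of_lt ht.2⟩).differentiableAt.differentiableWithinAt
    · intro t ht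
      rw [interior_Icc] at ht
      rw [(hd t ⟨le_of_lt ht.1, le_of_lt ht.2⟩).deriv]
      have ht0 : 0 < t := lt_of_lt_of_le hx (le_of_lt ht.1)
      have ht1 : t < 1 := lt_trans ht.2 hy1
      have : p / t - (1 - p) / (1 - t) = (p - t) / (t * (1 - t)) := by
        rw [div_sub_div _ _ (ne_of_gt ht0) (ne_of_gt (by linarith : (0:ℝ) < 1 - t))]
        congr 1
        ring
      rw [this]
      apply div_nonneg (sub_nonneg.mpr (le_trans (le_of_lt ht.2) hyp))
      exact le_of_lt (mul_pos ht0 (sub_pos.mpr ht1))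
  exact key ⟨le_refl x, hxy⟩ ⟨hxy, le_refl y⟩ hxy

/-- Symmetry of the payoff under swapping the two states. -/
lemma pay2_symm (p x : ℝ) : pay2 p x = pay2 (1 - p) (1 - x) := by
  unfold pay2
  have e1 : (1 - x = 0 ∧ 1 - p ≠ 0) ↔ (x = 1 ∧ p ≠ 1) := by
    constructor
    · rintro ⟨h1, h2⟩; exact ⟨by linarith, fun h => h2 (by rw [h]; ring)⟩
    · rintro ⟨h1, h2⟩; exact ⟨by linarith, fun h => h2 (by linarith)⟩
  have e2 : (1 - x = 1 ∧ 1 - p ≠ 1) ↔ (x = 0 ∧ p ≠ 0) := by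
    constructor
    · rintro ⟨h1, h2⟩; exact ⟨by linarith, fun h => h2 (by linarith)⟩
    · rintro ⟨h1, h2⟩; exact ⟨by linarith, fun h => h2 (by linarith)⟩
  simp only [e1, e2, sub_sub_cancel]
  exact add_comm _ _

/-- The payoff is increasing below `p`. -/
lemma pay2_incr (p x y : ℝ) (hp : p ∈ Set.Icc (0:ℝ) 1) (hx : 0 ≤ x) (hxy : x ≤ y)
    (hyp : y ≤ p) : pay2 p x ≤ pay2 p y := by
  rcases eq_or_lt_of_le hx with h0 | h0
  · rcases eq_or_ne p 0 with hp0 | hp0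
    · have hy : y = 0 := le_antisymm (hyp.trans hp0.le) (hx.trans hxy)
      have hx' : x = 0 := le_antisymm (hxy.trans hy.le) hx
      rw [hx', hy]
    · have : pay2 p x = ⊥ := by
        unfold pay2
        rw [if_pos ⟨h0.symm, hp0⟩]
        simp
      rw [this]; exact bot_le
  · have hy0 : 0 < y := lt_of_lt_of_le h0 hxy
    have hp1 : p ≤ 1 := hp.2
    rcases eq_or_lt_of_le (hyp.trans hp1) with hy1 | hy1
    · have hpe : p = 1 := le_antisymm hp1 (hy1 ▸ hyp)
      have hx1 : x ≤ 1 := hxy.trans hy1.le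
      unfold pay2
      rw [if_neg (by simp [ne_of_gt h0]), if_neg (by simp [hpe]),
          if_neg (by simp [ne_of_gt hy0]), if_neg (by simp [hpe])]
      norm_cast
      rw [hpe, hy1]
      simp only [sub_self, zero_mul, one_mul, add_zero, Real.log_one]
      exact Real.log_nonpos hx hx1
    · have hx1 : x < 1 := lt_of_le_of_lt hxy hy1
      unfold pay2
      rw [if_neg (by rintro ⟨h, -⟩; exact absurd h (ne_of_gt h0)),
          if_neg (by rintro ⟨h, -⟩; exact absurd h (ne_of_lt hx1)),
          if_neg (by rintro ⟨h, -⟩; exact absurd h (ne_of_gt hy0)),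
          if_neg (by rintro ⟨h, -⟩; exact absurd h (ne_of_lt hy1))]
      norm_cast
      exact real_incr p x y h0 hxy hyp hy1

/-- The payoff is decreasing above `p`. -/
lemma pay2_decr (p x y : ℝ) (hp : p ∈ Set.Icc (0:ℝ) 1) (hpy : p ≤ y) (hyx : y ≤ x)
    (hx1 : x ≤ 1) : pay2 p x ≤ pay2 p y := by
  rw [pay2_symm p x, pay2_symm p y]
  exact pay2_incr (1 - p) (1 - x) (1 - y) ⟨by linarith [hp.2], by linarith [hp.1]⟩
    (by linarith) (by linarith) (by linarith)

/-- agent a's best response to report `ρb` in the two-agent,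
two-state belief reporting game with log utility and the symmetric linear
opinion pool. -/
theorem stmt1 (pa ρb : ℝ) (hpa : pa ∈ Set.Icc (0:ℝ) 1) (hρb : ρb ∈ Set.Icc (0:ℝ) 1) :
    (ρb ≤ 2 * pa - 1 →
      IsMaxOn (fun ρa => pay2 pa ((ρa + ρb) / 2)) (Set.Icc (0:ℝ) 1) 1) ∧
    (2 * pa - 1 ≤ ρb → ρb ≤ 2 * pa →
      IsMaxOn (fun ρa => pay2 pa ((ρa + ρb) / 2)) (Set.Icc (0:ℝ) 1) (2 * pa - ρb)) ∧
    (2 * pa ≤ ρb →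
      IsMaxOn (fun ρa => pay2 pa ((ρa + ρb) / 2)) (Set.Icc (0:ℝ) 1) 0) := by
  obtain ⟨hb0, hb1⟩ := hρb
  refine ⟨fun h ρa hρa => ?_, fun h1 h2 ρa hρa => ?_, fun h ρa hρa => ?_⟩
  · exact pay2_incr pa ((ρa + ρb) / 2) ((1 + ρb) / 2) hpa
      (by linarith [hρa.1]) (by linarith [hρa.2]) (by linarith)
  · have he : ((2 * pa - ρb) + ρb) / 2 = pa := by ring
    simp only [he]
    rcases le_total ((ρa + ρb) / 2) pa with hc | hc
    · exact pay2_incr pa ((ρa + ρb) / 2) pa hpa (by linarith [hρa.1]) hc le_rfl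
    · exact pay2_decr pa ((ρa + ρb) / 2) pa hpa le_rfl hc (by linarith [hρa.2])
  · show pay2 pa ((ρa + ρb) / 2) ≤ pay2 pa ((0 + ρb) / 2)
    rw [zero_add]
    exact pay2_decr pa ((ρa + ρb) / 2) (ρb / 2) hpa
      (by linarith) (by linarith [hρa.1]) (by linarith [hρa.2])
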